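/- A double series ∑_{j=0}^∞ ∑_{k=0}^∞ a_{j,k} of complex numbers converges regularly if and only if it converges in Pringsheim's sense and, in addition, each of its row series ∑_{k=0}^∞ a_{j,k} (j ∈ ℕ) and each of its column series ∑_{j=0}^∞ a_{j,k} (k ∈ ℕ) converges as a single series. (Equivalence of Hardy's definition of regular convergence with the restricted-sense Cauchy condition.) -/

import Mathlib

open Filter Finset

private lemma pd (g : ℕ → ℂ) {t n : ℕ} (h : t ≤ n) :
    (∑ k ∈ Finset.range (n + 1), g k) - ∑ k ∈ Finset.range (t + 1), g k
      = ∑ k ∈ Finset.Icc (t + 1) n, g k := by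
  rw [← Finset.Ico_add_one_right_eq_Icc, Finset.sum_Ico_eq_sub _ (by omega)]

private lemma tail_small {g : ℕ → ℂ} {r : ℂ}
    (hg : Tendsto (fun n => ∑ k ∈ Finset.range (n + 1), g k) atTop (nhds r))
    {δ : ℝ} (hδ : 0 < δ) :
    ∃ t : ℕ, ∀ n N : ℕ, t < n → n ≤ N → ‖∑ k ∈ Finset.Icc n N, g k‖ < δ := by
  have hc := hg.cauchySeq
  rw [Metric.cauchySeq_iff] at hc
  obtain ⟨t, ht⟩ := hc δ hδ
  refine ⟨t, fun n N hn hnN => ?_⟩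
  obtain ⟨n', rfl⟩ : ∃ n', n = n' + 1 := ⟨n - 1, by omega⟩
  rw [← pd g (show n' ≤ N by omega)]
  have := ht N (by omega) n' (by omega)
  rwa [dist_eq_norm] at this

private lemma rect_eq (a : ℕ → ℕ → ℂ) {m M n N : ℕ} (hm : m ≤ M + 1) (hn : n ≤ N + 1) :
    ∑ j ∈ Finset.Icc m M, ∑ k ∈ Finset.Icc n N, a j k
      = ((∑ j ∈ Finset.range (M + 1), ∑ k ∈ Finset.range (N + 1), a j k)
          - ∑ j ∈ Finset.range m, ∑ k ∈ Finset.range (N + 1), a j k)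
        - ((∑ j ∈ Finset.range (M + 1), ∑ k ∈ Finset.range n, a j k)
          - ∑ j ∈ Finset.range m, ∑ k ∈ Finset.range n, a j k) := by
  have h1 : ∀ j : ℕ, ∑ k ∈ Finset.Icc n N, a j k
      = (∑ k ∈ Finset.range (N + 1), a j k) - ∑ k ∈ Finset.range n, a j k := by
    intro j
    rw [← Finset.Ico_add_one_right_eq_Icc, Finset.sum_Ico_eq_sub _ hn]
  calc ∑ j ∈ Finset.Icc m M, ∑ k ∈ Finset.Icc n N, a j k
      = ∑ j ∈ Finset.Icc m M,
          ((∑ k ∈ Finset.range (N + 1), a j k) - ∑ k ∈ Finset.range n, a j k) :=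
        Finset.sum_congr rfl fun j _ => h1 j
    _ = (∑ j ∈ Finset.Icc m M, ∑ k ∈ Finset.range (N + 1), a j k)
          - ∑ j ∈ Finset.Icc m M, ∑ k ∈ Finset.range n, a j k := Finset.sum_sub_distrib _ _
    _ = _ := by
        rw [← Finset.Ico_add_one_right_eq_Icc, Finset.sum_Ico_eq_sub _ hm, Finset.sum_Ico_eq_sub _ hm]

/-- A double series of complex numbers converges regularly if and only if
it converges in Pringsheim's sense and, in addition, each of its row series and each of its
column series converges as a single series (equivalence of Hardy's definition with the
restricted-sense Cauchy condition). -/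
theorem regular_convergence_iff_pringsheim_and_rows_columns (a : ℕ → ℕ → ℂ) :
    (∀ ε : ℝ, 0 < ε → ∃ κ : ℕ, ∀ m M n N : ℕ, m ≤ M → n ≤ N → κ < max m n →
      ‖∑ j ∈ Finset.Icc m M, ∑ k ∈ Finset.Icc n N, a j k‖ < ε) ↔
    ((∃ s : ℂ, ∀ ε : ℝ, 0 < ε → ∃ κ : ℕ, ∀ m n : ℕ, κ < m → κ < n →
        ‖(∑ j ∈ Finset.range (m + 1), ∑ k ∈ Finset.range (n + 1), a j k) - s‖ < ε) ∧
      (∀ j : ℕ, ∃ r : ℂ,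
        Tendsto (fun n => ∑ k ∈ Finset.range (n + 1), a j k) atTop (nhds r)) ∧
      (∀ k : ℕ, ∃ c : ℂ,
        Tendsto (fun m => ∑ j ∈ Finset.range (m + 1), a j k) atTop (nhds c))) := by
  constructor
  · intro H
    have hrow : ∀ j : ℕ, ∃ r : ℂ,
        Tendsto (fun n => ∑ k ∈ Finset.range (n + 1), a j k) atTop (nhds r) := by
      intro j
      refine cauchySeq_tendsto_of_complete ?_
      rw [Metric.cauchySeq_iff]
      intro ε hε
      obtain ⟨κ, hκ⟩ := H ε hε
      have key : ∀ p q : ℕ, κ + 1 ≤ q → q ≤ p →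
          dist (∑ k ∈ Finset.range (p + 1), a j k) (∑ k ∈ Finset.range (q + 1), a j k) < ε := by
        intro p q hq hqp
        rcases eq_or_lt_of_le hqp with rfl | hlt
        · simpa using hε
        · rw [dist_eq_norm, pd _ (by omega)]
          have := hκ j j (q + 1) p le_rfl (by omega) (by omega)
          simpa [Finset.Icc_self] using this
      refine ⟨κ + 1, fun p hp q hq => ?_⟩
      rcases le_total q p with h | h
      · exact key p q hq h
      · rw [dist_comm]; exact key q p hp h
    have hcol : ∀ k : ℕ, ∃ c : ℂ,
        Tendsto (fun m => ∑ j ∈ Finset.range (m + 1), a j k) atTop (nhds c) := by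
      intro k
      refine cauchySeq_tendsto_of_complete ?_
      rw [Metric.cauchySeq_iff]
      intro ε hε
      obtain ⟨κ, hκ⟩ := H ε hε
      have key : ∀ p q : ℕ, κ + 1 ≤ q → q ≤ p →
          dist (∑ j ∈ Finset.range (p + 1), a j k) (∑ j ∈ Finset.range (q + 1), a j k) < ε := by
        intro p q hq hqp
        rcases eq_or_lt_of_le hqp with rfl | hlt
        · simpa using hε
        · rw [dist_eq_norm, pd _ (by omega)]
          have := hκ (q + 1) p k k (by omega) le_rfl (by omega)
          simpa [Finset.Icc_self] using this
      refine ⟨κ + 1, fun p hp q hq => ?_⟩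
      rcases le_total q p with h | h
      · exact key p q hq h
      · rw [dist_comm]; exact key q p hp h
    have hdiag : CauchySeq
        (fun n => ∑ j ∈ Finset.range (n + 1), ∑ k ∈ Finset.range (n + 1), a j k) := by
      rw [Metric.cauchySeq_iff]
      intro ε hε
      obtain ⟨κ, hκ⟩ := H (ε / 2) (by positivity)
      have key : ∀ p q : ℕ, κ + 1 ≤ p → p ≤ q →
          dist (∑ j ∈ Finset.range (q + 1), ∑ k ∈ Finset.range (q + 1), a j k)
            (∑ j ∈ Finset.range (p + 1), ∑ k ∈ Finset.range (p + 1), a j k) < ε := by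
        intro p q hp hpq
        rcases eq_or_lt_of_le hpq with rfl | hlt
        · simpa using hε
        · have hA : ‖∑ j ∈ Finset.Icc 0 q, ∑ k ∈ Finset.Icc (p + 1) q, a j k‖ < ε / 2 :=
            hκ 0 q (p + 1) q (by omega) (by omega) (by omega)
          have hB : ‖∑ j ∈ Finset.Icc (p + 1) q, ∑ k ∈ Finset.Icc 0 p, a j k‖ < ε / 2 :=
            hκ (p + 1) q 0 p (by omega) (by omega) (by omega)
          have hsplit : (∑ j ∈ Finset.range (q + 1), ∑ k ∈ Finset.range (q + 1), a j k)
              - ∑ j ∈ Finset.range (p + 1), ∑ k ∈ Finset.range (p + 1), a j k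
              = (∑ j ∈ Finset.Icc 0 q, ∑ k ∈ Finset.Icc (p + 1) q, a j k)
                + ∑ j ∈ Finset.Icc (p + 1) q, ∑ k ∈ Finset.Icc 0 p, a j k := by
            rw [rect_eq a (by omega) (by omega), rect_eq a (by omega) (by omega)]
            simp
          rw [dist_eq_norm, hsplit]
          calc ‖_ + _‖ ≤ _ + _ := norm_add_le _ _
            _ < ε := by linarith
      refine ⟨κ + 1, fun p hp q hq => ?_⟩
      rcases le_total q p with h | h
      · exact key q p hq h
      · rw [dist_comm]; exact key p q hp h
    obtain ⟨s, hs⟩ := cauchySeq_tendsto_of_complete hdiag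
    refine ⟨⟨s, ?_⟩, hrow, hcol⟩
    intro ε hε
    obtain ⟨κ₁, h1⟩ := H (ε / 2) (by positivity)
    rw [Metric.tendsto_atTop] at hs
    obtain ⟨κ₂, h2⟩ := hs (ε / 2) (by positivity)
    refine ⟨max κ₁ κ₂, fun m n hm hn => ?_⟩
    have hts : ‖(∑ j ∈ Finset.range (min m n + 1), ∑ k ∈ Finset.range (min m n + 1), a j k)
        - s‖ < ε / 2 := by
      have := h2 (min m n) (by omega)
      rwa [dist_eq_norm] at this
    have hfirst : ‖(∑ j ∈ Finset.range (m + 1), ∑ k ∈ Finset.range (n + 1), a j k)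
        - ∑ j ∈ Finset.range (min m n + 1), ∑ k ∈ Finset.range (min m n + 1), a j k‖
        < ε / 2 := by
      rcases le_total m n with h | h
      · rw [min_eq_left h]
        rcases eq_or_lt_of_le h with rfl | hlt
        · simpa using (by positivity : (0:ℝ) < ε / 2)
        · have := h1 0 m (m + 1) n (by omega) (by omega) (by omega)
          rw [rect_eq a (by omega) (by omega)] at this
          simpa using this
      · rw [min_eq_right h]
        rcases eq_or_lt_of_le h with rfl | hlt
        · simpa using (by positivity : (0:ℝ) < ε / 2)
        · have := h1 (n + 1) m 0 n (by omega) (by omega) (by omega)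
          rw [rect_eq a (by omega) (by omega)] at this
          simpa using this
    have hdecomp : (∑ j ∈ Finset.range (m + 1), ∑ k ∈ Finset.range (n + 1), a j k) - s
        = ((∑ j ∈ Finset.range (m + 1), ∑ k ∈ Finset.range (n + 1), a j k)
            - ∑ j ∈ Finset.range (min m n + 1), ∑ k ∈ Finset.range (min m n + 1), a j k)
          + ((∑ j ∈ Finset.range (min m n + 1), ∑ k ∈ Finset.range (min m n + 1), a j k)
            - s) := by ring
    rw [hdecomp]
    calc ‖_ + _‖ ≤ _ + _ := norm_add_le _ _
      _ < ε := by linarith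
  · rintro ⟨⟨s, hs⟩, hR, hC⟩
    intro ε hε
    obtain ⟨κ₀, h0⟩ := hs (ε / 8) (by positivity)
    set δ : ℝ := ε / (2 * (κ₀ + 2)) with hδdef
    have hδ : 0 < δ := by positivity
    choose r hr using hR
    choose c hc using hC
    have hRt : ∀ j, ∃ t, ∀ n N, t < n → n ≤ N → ‖∑ k ∈ Finset.Icc n N, a j k‖ < δ :=
      fun j => tail_small (hr j) hδ
    have hCt : ∀ k, ∃ t, ∀ m M, t < m → m ≤ M → ‖∑ j ∈ Finset.Icc m M, a j k‖ < δ :=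
      fun k => tail_small (hc k) hδ
    choose ρ hρ using hRt
    choose σ hσ using hCt
    set κ : ℕ := κ₀ + 2 + (Finset.range (κ₀ + 2)).sup ρ + (Finset.range (κ₀ + 2)).sup σ
      with hκdef
    have hρκ : ∀ j, j < κ₀ + 2 → ρ j ≤ κ := by
      intro j hj
      have := Finset.le_sup (f := ρ) (Finset.mem_range.mpr hj)
      omega
    have hσκ : ∀ k, k < κ₀ + 2 → σ k ≤ κ := by
      intro k hk
      have := Finset.le_sup (f := σ) (Finset.mem_range.mpr hk)
      omega
    have hS : ∀ p q : ℕ, κ₀ + 2 ≤ p → κ₀ + 2 ≤ q →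
        ‖(∑ j ∈ Finset.range p, ∑ k ∈ Finset.range q, a j k) - s‖ < ε / 8 := by
      intro p q hp hq
      obtain ⟨p', rfl⟩ : ∃ p', p = p' + 1 := ⟨p - 1, by omega⟩
      obtain ⟨q', rfl⟩ : ∃ q', q = q' + 1 := ⟨q - 1, by omega⟩
      exact h0 p' q' (by omega) (by omega)
    have caseA : ∀ m M n N : ℕ, m ≤ M → n ≤ N → κ₀ + 2 ≤ m → κ₀ + 2 ≤ n →
        ‖∑ j ∈ Finset.Icc m M, ∑ k ∈ Finset.Icc n N, a j k‖ < ε / 2 := by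
      intro m M n N hmM hnN hm hn
      rw [rect_eq a (by omega) (by omega)]
      have h1 := hS (M + 1) (N + 1) (by omega) (by omega)
      have h2 := hS m (N + 1) hm (by omega)
      have h3 := hS (M + 1) n (by omega) hn
      have h4 := hS m n hm hn
      have key : ∀ x y z w : ℂ,
          ‖(x - y) - (z - w)‖ ≤ ‖x - s‖ + ‖y - s‖ + (‖z - s‖ + ‖w - s‖) := by
        intro x y z w
        have e : (x - y) - (z - w) = ((x - s) - (y - s)) - ((z - s) - (w - s)) := by ring
        rw [e]
        exact le_trans (norm_sub_le _ _) (add_le_add (norm_sub_le _ _) (norm_sub_le _ _))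
      exact lt_of_le_of_lt (key _ _ _ _) (by linarith)
    have hcardδ : ∀ (u v : ℕ), v < κ₀ + 2 →
        (↑(Finset.Icc u v).card : ℝ) * δ ≤ ε / 2 := by
      intro u v hv
      have hcard : (Finset.Icc u v).card ≤ κ₀ + 2 := by
        rw [Nat.card_Icc]; omega
      have h1 : (↑(Finset.Icc u v).card : ℝ) * δ ≤ (↑(κ₀ + 2) : ℝ) * δ :=
        mul_le_mul_of_nonneg_right (by exact_mod_cast hcard) (le_of_lt hδ)
      have h2 : (↑(κ₀ + 2) : ℝ) * δ = ε / 2 := by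
        rw [hδdef]
        have hne : ((κ₀ : ℝ) + 2) ≠ 0 := by positivity
        push_cast
        field_simp
      linarith
    have colpart : ∀ m M n N' : ℕ, κ < m → m ≤ M → N' < κ₀ + 2 →
        ‖∑ j ∈ Finset.Icc m M, ∑ k ∈ Finset.Icc n N', a j k‖ ≤ ε / 2 := by
      intro m M n N' hm hmM hN'
      rw [Finset.sum_comm]
      calc ‖∑ k ∈ Finset.Icc n N', ∑ j ∈ Finset.Icc m M, a j k‖
          ≤ ∑ k ∈ Finset.Icc n N', ‖∑ j ∈ Finset.Icc m M, a j k‖ := norm_sum_le _ _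
        _ ≤ ∑ _k ∈ Finset.Icc n N', δ := by
            refine Finset.sum_le_sum fun k hk => le_of_lt ?_
            have hk' : k < κ₀ + 2 := by
              have := (Finset.mem_Icc.mp hk).2; omega
            exact hσ k m M (by have := hσκ k hk'; omega) hmM
        _ = (↑(Finset.Icc n N').card : ℝ) * δ := by
            rw [Finset.sum_const, nsmul_eq_mul]
        _ ≤ ε / 2 := hcardδ n N' hN'
    have rowpart : ∀ m M' n N : ℕ, κ < n → n ≤ N → M' < κ₀ + 2 →
        ‖∑ j ∈ Finset.Icc m M', ∑ k ∈ Finset.Icc n N, a j k‖ ≤ ε / 2 := by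
      intro m M' n N hn hnN hM'
      calc ‖∑ j ∈ Finset.Icc m M', ∑ k ∈ Finset.Icc n N, a j k‖
          ≤ ∑ j ∈ Finset.Icc m M', ‖∑ k ∈ Finset.Icc n N, a j k‖ := norm_sum_le _ _
        _ ≤ ∑ _j ∈ Finset.Icc m M', δ := by
            refine Finset.sum_le_sum fun j hj => le_of_lt ?_
            have hj' : j < κ₀ + 2 := by
              have := (Finset.mem_Icc.mp hj).2; omega
            exact hρ j n N (by have := hρκ j hj'; omega) hnN
        _ = (↑(Finset.Icc m M').card : ℝ) * δ := by
            rw [Finset.sum_const, nsmul_eq_mul]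
        _ ≤ ε / 2 := hcardδ m M' hM'
    refine ⟨κ, fun m M n N hmM hnN hmax => ?_⟩
    rcases lt_or_ge m (κ₀ + 2) with hmsmall | hmbig
    · -- m small, so n > κ : case C
      have hn : κ < n := by omega
      rcases lt_or_ge M (κ₀ + 2) with hM | hM
      · exact lt_of_le_of_lt (rowpart m M n N hn hnN hM) (by linarith)
      · have hun : Finset.Icc m M = Finset.Icc m (κ₀ + 1) ∪ Finset.Icc (κ₀ + 2) M := by
          ext x; simp only [Finset.mem_Icc, Finset.mem_union]; omega
        have hdis : Disjoint (Finset.Icc m (κ₀ + 1)) (Finset.Icc (κ₀ + 2) M) := by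
          simp only [Finset.disjoint_left, Finset.mem_Icc]; omega
        rw [hun, Finset.sum_union hdis]
        have hA := rowpart m (κ₀ + 1) n N hn hnN (by omega)
        have hB := caseA (κ₀ + 2) M n N hM hnN le_rfl (by omega)
        calc ‖_ + _‖ ≤ _ + _ := norm_add_le _ _
          _ < ε := by linarith
    · rcases lt_or_ge n (κ₀ + 2) with hnsmall | hnbig
      · -- n small, so m > κ : case B
        have hm : κ < m := by omega
        rcases lt_or_ge N (κ₀ + 2) with hN | hN
        · exact lt_of_le_of_lt (colpart m M n N hm hmM hN) (by linarith)
        · have hun : Finset.Icc n N = Finset.Icc n (κ₀ + 1) ∪ Finset.Icc (κ₀ + 2) N := by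
            ext x; simp only [Finset.mem_Icc, Finset.mem_union]; omega
          have hdis : Disjoint (Finset.Icc n (κ₀ + 1)) (Finset.Icc (κ₀ + 2) N) := by
            simp only [Finset.disjoint_left, Finset.mem_Icc]; omega
          have hsplit : ∑ j ∈ Finset.Icc m M, ∑ k ∈ Finset.Icc n N, a j k
              = (∑ j ∈ Finset.Icc m M, ∑ k ∈ Finset.Icc n (κ₀ + 1), a j k)
                + ∑ j ∈ Finset.Icc m M, ∑ k ∈ Finset.Icc (κ₀ + 2) N, a j k := by
            rw [← Finset.sum_add_distrib]
            refine Finset.sum_congr rfl fun j _ => ?_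
            rw [hun, Finset.sum_union hdis]
          rw [hsplit]
          have hA := colpart m M n (κ₀ + 1) hm hmM (by omega)
          have hB := caseA m M (κ₀ + 2) N hmM hN (by omega) le_rfl
          calc ‖_ + _‖ ≤ _ + _ := norm_add_le _ _
            _ < ε := by linarith
      · exact lt_trans (caseA m M n N hmM hnN hmbig hnbig) (by linarith)
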